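/- Fix I ≥ 1 and let M_I be the structure with domain {(m,n) ∈ ℕ × ℤ : m ≤ I and (m = 0 → n ≥ 0)}, zero (0,0), successor s((m,n)) = (m,n+1), predecessor p((m,n)) = (0, max(n−1,0)) if m = 0 and (m,n−1) otherwise, and addition (m₁,n₁)+(m₂,n₂) = (n₁+n₂ paired with m₁ ↾ m₂), where a ↾ b = a if a ≠ 0 and b otherwise. Then M_I satisfies: s(0) ≠ 0, p(0)=0, p(s(x))=x, x+0=x, x+s(y)=s(x+y), x = 0 ∨ x = s(p(x)), associativity of +, and k + x = x + k for every element x and every standard element k = sᵏ(0). -/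

import Mathlib

namespace Stmt4

/-- `a ↾ b = a` if `a ≠ 0`, and `b` otherwise. -/
def res (a b : ℕ) : ℕ := if a ≠ 0 then a else b

/-- Domain of `M_I`: pairs `(m,n) ∈ ℕ × ℤ` with `m ≤ I` and `m = 0 → n ≥ 0`. -/
def D (I : ℕ) : Type := {x : ℕ × ℤ // x.1 ≤ I ∧ (x.1 = 0 → 0 ≤ x.2)}

def zero (I : ℕ) : D I := ⟨(0, 0), ⟨Nat.zero_le I, fun _ => le_refl 0⟩⟩

def succ {I : ℕ} (a : D I) : D I :=
  ⟨(a.1.1, a.1.2 + 1), ⟨a.2.1, fun h => by have := a.2.2 h; omega⟩⟩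

def pred {I : ℕ} (a : D I) : D I :=
  if h : a.1.1 = 0 then ⟨(0, max (a.1.2 - 1) 0), ⟨Nat.zero_le I, fun _ => le_max_right _ _⟩⟩
  else ⟨(a.1.1, a.1.2 - 1), ⟨a.2.1, fun h0 => absurd h0 h⟩⟩

def add {I : ℕ} (a b : D I) : D I :=
  ⟨(res a.1.1 b.1.1, a.1.2 + b.1.2), by
    refine ⟨?_, ?_⟩
    · unfold res; split
      · exact a.2.1
      · exact b.2.1
    · intro h
      unfold res at h
      split at h
      · omega
      · rename_i h0
        push_neg at h0
        have := a.2.2 h0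
        have := b.2.2 h
        omega⟩

/-- The standard element `sᵏ(0)`. -/
def numeral (I k : ℕ) : D I := succ^[k] (zero I)

lemma numeral_val (I k : ℕ) : (numeral I k).1 = (0, (k : ℤ)) := by
  induction k with
  | zero => rfl
  | succ n ih =>
    unfold numeral at *
    rw [Function.iterate_succ_apply']
    simp [succ, ih]

lemma res_assoc (a b c : ℕ) : res a (res b c) = res (res a b) c := by
  unfold res; split_ifs <;> simp_all

lemma res_zero (a : ℕ) : res a 0 = a := by
  unfold res; split_ifs <;> omega

lemma res_zero' (a : ℕ) : res 0 a = a := by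
  unfold res; simp

theorem stmt4 (I : ℕ) (hI : 1 ≤ I) :
    succ (zero I) ≠ zero I ∧
    pred (zero I) = zero I ∧
    (∀ x : D I, pred (succ x) = x) ∧
    (∀ x : D I, add x (zero I) = x) ∧
    (∀ x y : D I, add x (succ y) = succ (add x y)) ∧
    (∀ x : D I, x = zero I ∨ x = succ (pred x)) ∧
    (∀ x y z : D I, add x (add y z) = add (add x y) z) ∧
    (∀ (k : ℕ) (x : D I), add (numeral I k) x = add x (numeral I k)) := by
  refine ⟨?_, ?_, ?_, ?_, ?_, ?_, ?_, ?_⟩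
  · intro h
    have := congrArg (fun a : D I => a.1.2) h
    simp [succ, zero] at this
  · apply Subtype.ext
    simp [pred, zero]
  · rintro ⟨⟨m, n⟩, h1, h2⟩
    apply Subtype.ext
    by_cases h : m = 0
    · subst h
      have := h2 rfl
      simp only [pred, succ]
      simp
      omega
    · simp only [pred, succ, h, dif_neg]
      simp [h]
  · rintro ⟨⟨m, n⟩, h1, h2⟩
    apply Subtype.ext
    simp [add, zero, res_zero]
  · intro x y
    apply Subtype.ext
    simp only [add, succ]
    congr 1
    ring
  · rintro ⟨⟨m, n⟩, h1, h2⟩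
    by_cases h : m = 0
    · subst h
      have hn := h2 rfl
      by_cases h2' : n = 0
      · left
        apply Subtype.ext
        simp [zero, h2']
      · right
        apply Subtype.ext
        simp only [pred, succ]
        simp
        omega
    · right
      apply Subtype.ext
      simp only [pred, succ, h, dif_neg]
      simp [h]
  · rintro ⟨⟨m1, n1⟩, hx⟩ ⟨⟨m2, n2⟩, hy⟩ ⟨⟨m3, n3⟩, hz⟩
    apply Subtype.ext
    simp only [add]
    refine Prod.ext ?_ (by ring)
    exact res_assoc m1 m2 m3
  · rintro k ⟨⟨m, n⟩, hx⟩
    apply Subtype.ext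
    simp only [add, numeral_val]
    refine Prod.ext ?_ (by ring)
    simp [res_zero, res_zero']

end Stmt4
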